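/- Let c = Σ_{i=1}^{6} α_i M_i be an edge-weighting of the Petersen graph written in the basis of its six perfect matchings, and suppose all entries of c are positive integers. Then either all α_i are integers or all α_i are half-integers (α_i ∈ 1/2 + Z), and in both cases all α_i ≥ 0, provided additionally that every odd cut of the weighted graph has weight at least r, where r is the common weighted vertex degree. -/

import Mathlib

open Finset
open scoped Classical

/-- The vertices of the Petersen graph: 2-element subsets of a 5-element set. -/
abbrev PetersenV := {s : Finset (Fin 5) // s.card = 2}

/-- The Petersen graph, realized as the Kneser graph `K(5,2)`:
2-element subsets of `{1,…,5}`, adjacent iff disjoint. -/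
def Petersen : SimpleGraph PetersenV where
  Adj a b := Disjoint a.1 b.1 ∧ a ≠ b
  symm := ⟨fun a b h => ⟨h.1.symm, Ne.symm h.2⟩⟩
  loopless := ⟨fun a h => h.2 rfl⟩

/-- The edges of the Petersen graph. -/
abbrev PetersenE := {e : Sym2 PetersenV // e ∈ Petersen.edgeSet}

/-- A perfect matching of a simple graph, as a finite set of edges covering
every vertex exactly once. -/
def SimpleGraph.IsPMFinset {V : Type} [Fintype V] (G : SimpleGraph V)
    (M : Finset (Sym2 V)) : Prop :=
  (∀ e ∈ M, e ∈ G.edgeSet) ∧ ∀ v : V, (M.filter fun e => v ∈ e).card = 1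

/-- The 0,1 indicator vector (indexed by the 15 edges of the Petersen graph)
of a set of edges. -/
noncomputable def ind (M : Finset (Sym2 PetersenV)) : PetersenE → ℝ :=
  fun e => if e.1 ∈ M then 1 else 0

/-- The weighted degree of the edge-weighting `c` at the vertex `v`. -/
noncomputable def wdeg (c : PetersenE → ℝ) (v : PetersenV) : ℝ :=
  ∑ e : PetersenE, if v ∈ e.1 then c e else 0

/-! ### Auxiliary machinery -/

set_option maxRecDepth 40000
set_option maxHeartbeats 2000000

/-- Convenient constructor for Petersen vertices. -/
def vv (a b : Fin 5) (h : ({a,b} : Finset (Fin 5)).card = 2 := by decide) :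
    PetersenV := ⟨{a,b}, h⟩

/-- The 15 edges of the Petersen graph as an explicit finset. -/
def myE : Finset (Sym2 PetersenV) := {s(vv 0 1, vv 2 3), s(vv 0 1, vv 2 4), s(vv 0 1, vv 3 4), s(vv 0 2, vv 1 3), s(vv 0 2, vv 1 4), s(vv 0 2, vv 3 4), s(vv 0 3, vv 1 2), s(vv 0 3, vv 1 4), s(vv 0 3, vv 2 4), s(vv 0 4, vv 1 2), s(vv 0 4, vv 1 3), s(vv 0 4, vv 2 3), s(vv 1 2, vv 3 4), s(vv 1 3, vv 2 4), s(vv 1 4, vv 2 3)}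

def PM0 : Finset (Sym2 PetersenV) := {s(vv 0 1, vv 2 3), s(vv 0 2, vv 1 4), s(vv 0 3, vv 2 4), s(vv 0 4, vv 1 3), s(vv 1 2, vv 3 4)}
def PM1 : Finset (Sym2 PetersenV) := {s(vv 0 1, vv 2 3), s(vv 0 2, vv 3 4), s(vv 0 3, vv 1 4), s(vv 0 4, vv 1 2), s(vv 1 3, vv 2 4)}
def PM2 : Finset (Sym2 PetersenV) := {s(vv 0 1, vv 2 4), s(vv 0 2, vv 1 3), s(vv 0 3, vv 1 4), s(vv 0 4, vv 2 3), s(vv 1 2, vv 3 4)}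
def PM3 : Finset (Sym2 PetersenV) := {s(vv 0 1, vv 2 4), s(vv 0 2, vv 3 4), s(vv 0 3, vv 1 2), s(vv 0 4, vv 1 3), s(vv 1 4, vv 2 3)}
def PM4 : Finset (Sym2 PetersenV) := {s(vv 0 1, vv 3 4), s(vv 0 2, vv 1 3), s(vv 0 3, vv 2 4), s(vv 0 4, vv 1 2), s(vv 1 4, vv 2 3)}
def PM5 : Finset (Sym2 PetersenV) := {s(vv 0 1, vv 3 4), s(vv 0 2, vv 1 4), s(vv 0 3, vv 1 2), s(vv 0 4, vv 2 3), s(vv 1 3, vv 2 4)}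

section DecideFacts

local instance adjDec : DecidableRel Petersen.Adj := fun a b =>
  decidable_of_iff (Disjoint a.1 b.1 ∧ a ≠ b) Iff.rfl

set_option maxRecDepth 40000
set_option synthInstance.maxSize 4000
set_option maxHeartbeats 1600000
set_option synthInstance.maxHeartbeats 2000000

theorem edge_classify : ∀ e : Sym2 PetersenV, e ∈ Petersen.edgeSet ↔ e ∈ myE := by
  decide

theorem edge_list : ∀ e : Sym2 PetersenV, e ∈ myE →
    (e = s(vv 0 1, vv 2 3) ∨ e = s(vv 0 1, vv 2 4) ∨ e = s(vv 0 1, vv 3 4) ∨ e = s(vv 0 2, vv 1 3) ∨ e = s(vv 0 2, vv 1 4) ∨ e = s(vv 0 2, vv 3 4) ∨ e = s(vv 0 3, vv 1 2) ∨ e = s(vv 0 3, vv 1 4) ∨ e = s(vv 0 3, vv 2 4) ∨ e = s(vv 0 4, vv 1 2) ∨ e = s(vv 0 4, vv 1 3) ∨ e = s(vv 0 4, vv 2 3) ∨ e = s(vv 1 2, vv 3 4) ∨ e = s(vv 1 3, vv 2 4) ∨ e = s(vv 1 4, vv 2 3)) := by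
  decide

theorem edges_at_v01 : ∀ e ∈ myE, vv 0 1 ∈ e →
    (e = s(vv 0 1, vv 2 3) ∨ e = s(vv 0 1, vv 2 4) ∨ e = s(vv 0 1, vv 3 4)) := by
  decide

theorem deg2 : ∀ e ∈ myE, ((univ : Finset PetersenV).filter fun v => v ∈ e).card = 2 := by
  decide

theorem cardV : (univ : Finset PetersenV).card = 10 := by decide

theorem pm_classify0 : ∀ M ∈ (myE.filter fun e => vv 0 1 ∉ e).powersetCard 4,
    (∀ v : PetersenV, ((insert (s(vv 0 1, vv 2 3)) M).filter fun e => v ∈ e).card = 1) →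
    (insert (s(vv 0 1, vv 2 3)) M = PM0 ∨ insert (s(vv 0 1, vv 2 3)) M = PM1) :=
  @of_decide_eq_true _ (Finset.decidableDforallFinset) rfl

theorem pm_classify1 : ∀ M ∈ (myE.filter fun e => vv 0 1 ∉ e).powersetCard 4,
    (∀ v : PetersenV, ((insert (s(vv 0 1, vv 2 4)) M).filter fun e => v ∈ e).card = 1) →
    (insert (s(vv 0 1, vv 2 4)) M = PM2 ∨ insert (s(vv 0 1, vv 2 4)) M = PM3) :=
  @of_decide_eq_true _ (Finset.decidableDforallFinset) rfl

theorem pm_classify2 : ∀ M ∈ (myE.filter fun e => vv 0 1 ∉ e).powersetCard 4,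
    (∀ v : PetersenV, ((insert (s(vv 0 1, vv 3 4)) M).filter fun e => v ∈ e).card = 1) →
    (insert (s(vv 0 1, vv 3 4)) M = PM4 ∨ insert (s(vv 0 1, vv 3 4)) M = PM5) :=
  @of_decide_eq_true _ (Finset.decidableDforallFinset) rfl

theorem hPM0 : Petersen.IsPMFinset PM0 :=
  ⟨fun e he => (edge_classify e).2 ((by decide : ∀ x ∈ PM0, x ∈ myE) e he),
   by intro v; rw [Finset.filter_congr_decidable]; revert v; decide⟩
theorem hPM1 : Petersen.IsPMFinset PM1 :=
  ⟨fun e he => (edge_classify e).2 ((by decide : ∀ x ∈ PM1, x ∈ myE) e he),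
   by intro v; rw [Finset.filter_congr_decidable]; revert v; decide⟩
theorem hPM2 : Petersen.IsPMFinset PM2 :=
  ⟨fun e he => (edge_classify e).2 ((by decide : ∀ x ∈ PM2, x ∈ myE) e he),
   by intro v; rw [Finset.filter_congr_decidable]; revert v; decide⟩
theorem hPM3 : Petersen.IsPMFinset PM3 :=
  ⟨fun e he => (edge_classify e).2 ((by decide : ∀ x ∈ PM3, x ∈ myE) e he),
   by intro v; rw [Finset.filter_congr_decidable]; revert v; decide⟩
theorem hPM4 : Petersen.IsPMFinset PM4 :=
  ⟨fun e he => (edge_classify e).2 ((by decide : ∀ x ∈ PM4, x ∈ myE) e he),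
   by intro v; rw [Finset.filter_congr_decidable]; revert v; decide⟩
theorem hPM5 : Petersen.IsPMFinset PM5 :=
  ⟨fun e he => (edge_classify e).2 ((by decide : ∀ x ∈ PM5, x ∈ myE) e he),
   by intro v; rw [Finset.filter_congr_decidable]; revert v; decide⟩
end DecideFacts


/-- Classification of the perfect matchings of the Petersen graph. -/
theorem pm_cases (M : Finset (Sym2 PetersenV)) (h : Petersen.IsPMFinset M) :
    M = PM0 ∨ M = PM1 ∨ M = PM2 ∨ M = PM3 ∨ M = PM4 ∨ M = PM5 := by
  have hsub : ∀ e ∈ M, e ∈ myE := fun e he => (edge_classify e).1 (h.1 e he)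
  have hdeg : ∀ v : PetersenV, (M.filter fun e => v ∈ e).card = 1 := fun v => by
    have := h.2 v; rwa [Finset.filter_congr_decidable] at this
  have hcard : M.card = 5 := by
    have h10 : ∑ v : PetersenV, (M.filter fun e => v ∈ e).card = 10 := by
      rw [Finset.sum_congr rfl (fun v _ => hdeg v), Finset.sum_const, cardV, smul_eq_mul, mul_one]
    have h2 : ∑ v : PetersenV, (M.filter fun e => v ∈ e).card = 2 * M.card := by
      simp only [Finset.card_filter]
      rw [Finset.sum_comm]
      have key : ∀ e ∈ M, (∑ v : PetersenV, if v ∈ e then 1 else 0) = 2 := by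
        intro e he
        rw [← Finset.card_filter]
        exact deg2 e (hsub e he)
      rw [Finset.sum_congr rfl key, Finset.sum_const, smul_eq_mul, mul_comm]
    omega
  obtain ⟨e0, hfe⟩ := Finset.card_eq_one.1 (hdeg (vv 0 1))
  have he0f : e0 ∈ M.filter fun e => vv 0 1 ∈ e := by
    rw [hfe]; exact Finset.mem_singleton_self e0
  obtain ⟨he0M, he0v⟩ := Finset.mem_filter.1 he0f
  have herase : M.erase e0 ∈ (myE.filter fun e => vv 0 1 ∉ e).powersetCard 4 := by
    rw [Finset.mem_powersetCard]
    refine ⟨fun x hx => ?_, by rw [Finset.card_erase_of_mem he0M, hcard]⟩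
    have hxM := Finset.mem_of_mem_erase hx
    refine Finset.mem_filter.2 ⟨hsub x hxM, fun hv => ?_⟩
    exact (Finset.ne_of_mem_erase hx)
      (Finset.mem_singleton.1 (hfe ▸ Finset.mem_filter.2 ⟨hxM, hv⟩))
  have hM : M = insert e0 (M.erase e0) := (Finset.insert_erase he0M).symm
  rcases edges_at_v01 e0 (hsub e0 he0M) he0v with rfl | rfl | rfl
  · rcases pm_classify0 (M.erase _) herase (fun v => by rw [← hM]; exact hdeg v) with h' | h' <;>
      rw [hM] <;> tauto
  · rcases pm_classify1 (M.erase _) herase (fun v => by rw [← hM]; exact hdeg v) with h' | h' <;>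
      rw [hM] <;> tauto
  · rcases pm_classify2 (M.erase _) herase (fun v => by rw [← hM]; exact hdeg v) with h' | h' <;>
      rw [hM] <;> tauto

abbrev Msub := {M : Finset (Sym2 PetersenV) // Petersen.IsPMFinset M}

def a0 : Msub := ⟨PM0, hPM0⟩
def a1 : Msub := ⟨PM1, hPM1⟩
def a2 : Msub := ⟨PM2, hPM2⟩
def a3 : Msub := ⟨PM3, hPM3⟩
def a4 : Msub := ⟨PM4, hPM4⟩
def a5 : Msub := ⟨PM5, hPM5⟩

theorem sum_Msub {inst : Fintype Msub} (f : Msub → ℝ) :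
    (@Finset.univ Msub inst).sum f = f a0 + f a1 + f a2 + f a3 + f a4 + f a5 := by
  have hu : (@Finset.univ Msub inst) = {a0, a1, a2, a3, a4, a5} := by
    ext M
    simp only [Finset.mem_univ, true_iff, Finset.mem_insert, Finset.mem_singleton]
    rcases pm_cases M.1 M.2 with h | h | h | h | h | h
    exacts [Or.inl (Subtype.ext h), Or.inr (Or.inl (Subtype.ext h)), Or.inr (Or.inr (Or.inl (Subtype.ext h))), Or.inr (Or.inr (Or.inr (Or.inl (Subtype.ext h)))), Or.inr (Or.inr (Or.inr (Or.inr (Or.inl (Subtype.ext h))))), Or.inr (Or.inr (Or.inr (Or.inr (Or.inr (Subtype.ext h)))))]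
  rw [hu, Finset.sum_insert (by decide), Finset.sum_insert (by decide),
    Finset.sum_insert (by decide), Finset.sum_insert (by decide),
    Finset.sum_insert (by decide), Finset.sum_singleton]
  ring

def E0 : PetersenE := ⟨s(vv 0 1, vv 2 3), (edge_classify _).2 (by decide)⟩
def E1 : PetersenE := ⟨s(vv 0 1, vv 2 4), (edge_classify _).2 (by decide)⟩
def E2 : PetersenE := ⟨s(vv 0 1, vv 3 4), (edge_classify _).2 (by decide)⟩
def E3 : PetersenE := ⟨s(vv 0 2, vv 1 3), (edge_classify _).2 (by decide)⟩
def E4 : PetersenE := ⟨s(vv 0 2, vv 1 4), (edge_classify _).2 (by decide)⟩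
def E5 : PetersenE := ⟨s(vv 0 2, vv 3 4), (edge_classify _).2 (by decide)⟩
def E6 : PetersenE := ⟨s(vv 0 3, vv 1 2), (edge_classify _).2 (by decide)⟩
def E7 : PetersenE := ⟨s(vv 0 3, vv 1 4), (edge_classify _).2 (by decide)⟩
def E8 : PetersenE := ⟨s(vv 0 3, vv 2 4), (edge_classify _).2 (by decide)⟩
def E9 : PetersenE := ⟨s(vv 0 4, vv 1 2), (edge_classify _).2 (by decide)⟩
def E10 : PetersenE := ⟨s(vv 0 4, vv 1 3), (edge_classify _).2 (by decide)⟩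
def E11 : PetersenE := ⟨s(vv 0 4, vv 2 3), (edge_classify _).2 (by decide)⟩
def E12 : PetersenE := ⟨s(vv 1 2, vv 3 4), (edge_classify _).2 (by decide)⟩
def E13 : PetersenE := ⟨s(vv 1 3, vv 2 4), (edge_classify _).2 (by decide)⟩
def E14 : PetersenE := ⟨s(vv 1 4, vv 2 3), (edge_classify _).2 (by decide)⟩

theorem sum_E {inst : Fintype PetersenE} (f : PetersenE → ℝ) :
    (@Finset.univ PetersenE inst).sum f =
      f E0 + f E1 + f E2 + f E3 + f E4 + f E5 + f E6 + f E7 + f E8 + f E9 + f E10 + f E11 + f E12 + f E13 + f E14 := by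
  have hu : (@Finset.univ PetersenE inst) = {E0, E1, E2, E3, E4, E5, E6, E7, E8, E9, E10, E11, E12, E13, E14} := by
    ext e
    simp only [Finset.mem_univ, true_iff, Finset.mem_insert, Finset.mem_singleton]
    rcases edge_list e.1 ((edge_classify e.1).1 e.2) with h|h|h|h|h|h|h|h|h|h|h|h|h|h|h
    exacts [Or.inl (Subtype.ext h), Or.inr (Or.inl (Subtype.ext h)), Or.inr (Or.inr (Or.inl (Subtype.ext h))), Or.inr (Or.inr (Or.inr (Or.inl (Subtype.ext h)))), Or.inr (Or.inr (Or.inr (Or.inr (Or.inl (Subtype.ext h))))), Or.inr (Or.inr (Or.inr (Or.inr (Or.inr (Or.inl (Subtype.ext h)))))), Or.inr (Or.inr (Or.inr (Or.inr (Or.inr (Or.inr (Or.inl (Subtype.ext h))))))), Or.inr (Or.inr (Or.inr (Or.inr (Or.inr (Or.inr (Or.inr (Or.inl (Subtype.ext h)))))))), Or.inr (Or.inr (Or.inr (Or.inr (Or.inr (Or.inr (Or.inr (Or.inr (Or.inl (Subtype.ext h))))))))), Or.inr (Or.inr (Or.inr (Or.inr (Or.inr (Or.inr (Or.inr (Or.inr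 (Or.inr (Or.inl (Subtype.ext h)))))))))), Or.inr (Or.inr (Or.inr (Or.inr (Or.inr (Or.inr (Or.inr (Or.inr (Or.inr (Or.inr (Or.inl (Subtype.ext h))))))))))), Or.inr (Or.inr (Or.inr (Or.inr (Or.inr (Or.inr (Or.inr (Or.inr (Or.inr (Or.inr (Or.inr (Or.inl (Subtype.ext h)))))))))))), Or.inr (Or.inr (Or.inr (Or.inr (Or.inr (Or.inr (Or.inr (Or.inr (Or.inr (Or.inr (Or.inr (Or.inr (Or.inl (Subtype.ext h))))))))))))), Or.inr (Or.inr (Or.inr (Or.inr (Or.inr (Or.inr (Or.inr (Or.inr (Or.inr (Or.inr (Or.inr (Or.inr (Or.inr (Or.inl (Subtype.ext h)))))))))))))), Or.inr (Or.inr (Or.inr (Or.inr (Or.inr (Or.inr (Or.inr (Or.inr (Or.inr (Or.inr (Or.inr (Or.inr (Or.inr (Or.inr (Subtype.ext h))))))))))))))]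
  rw [hu]
  rw [Finset.sum_insert (by decide), Finset.sum_insert (by decide), Finset.sum_insert (by decide), Finset.sum_insert (by decide), Finset.sum_insert (by decide), Finset.sum_insert (by decide), Finset.sum_insert (by decide), Finset.sum_insert (by decide), Finset.sum_insert (by decide), Finset.sum_insert (by decide), Finset.sum_insert (by decide), Finset.sum_insert (by decide), Finset.sum_insert (by decide), Finset.sum_insert (by decide), Finset.sum_singleton]
  ring

def S0 : Finset PetersenV := {vv 0 1, vv 0 2, vv 1 3, vv 2 4, vv 3 4}
def S1 : Finset PetersenV := {vv 0 1, vv 0 3, vv 1 2, vv 2 4, vv 3 4}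
def S2 : Finset PetersenV := {vv 0 1, vv 0 2, vv 1 4, vv 2 3, vv 3 4}
def S3 : Finset PetersenV := {vv 0 1, vv 0 4, vv 1 2, vv 2 3, vv 3 4}
def S4 : Finset PetersenV := {vv 0 1, vv 0 4, vv 1 3, vv 2 3, vv 2 4}
def S5 : Finset PetersenV := {vv 0 1, vv 0 3, vv 1 4, vv 2 3, vv 2 4}

theorem cE0 (α : Msub → ℝ) (c : PetersenE → ℝ)
    (hc : ∀ e : PetersenE, c e = ∑ M, α M * ind M.1 e) :
    c E0 = α a0 + α a1 := by
  rw [hc, sum_Msub]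
  simp only [ind]
  rw [if_pos (by decide : (E0 : PetersenE).1 ∈ (a0 : Msub).1),
    if_pos (by decide : (E0 : PetersenE).1 ∈ (a1 : Msub).1),
    if_neg (by decide : ¬((E0 : PetersenE).1 ∈ (a2 : Msub).1)),
    if_neg (by decide : ¬((E0 : PetersenE).1 ∈ (a3 : Msub).1)),
    if_neg (by decide : ¬((E0 : PetersenE).1 ∈ (a4 : Msub).1)),
    if_neg (by decide : ¬((E0 : PetersenE).1 ∈ (a5 : Msub).1))]
  ring

theorem cE1 (α : Msub → ℝ) (c : PetersenE → ℝ)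
    (hc : ∀ e : PetersenE, c e = ∑ M, α M * ind M.1 e) :
    c E1 = α a2 + α a3 := by
  rw [hc, sum_Msub]
  simp only [ind]
  rw [if_neg (by decide : ¬((E1 : PetersenE).1 ∈ (a0 : Msub).1)),
    if_neg (by decide : ¬((E1 : PetersenE).1 ∈ (a1 : Msub).1)),
    if_pos (by decide : (E1 : PetersenE).1 ∈ (a2 : Msub).1),
    if_pos (by decide : (E1 : PetersenE).1 ∈ (a3 : Msub).1),
    if_neg (by decide : ¬((E1 : PetersenE).1 ∈ (a4 : Msub).1)),
    if_neg (by decide : ¬((E1 : PetersenE).1 ∈ (a5 : Msub).1))]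
  ring

theorem cE2 (α : Msub → ℝ) (c : PetersenE → ℝ)
    (hc : ∀ e : PetersenE, c e = ∑ M, α M * ind M.1 e) :
    c E2 = α a4 + α a5 := by
  rw [hc, sum_Msub]
  simp only [ind]
  rw [if_neg (by decide : ¬((E2 : PetersenE).1 ∈ (a0 : Msub).1)),
    if_neg (by decide : ¬((E2 : PetersenE).1 ∈ (a1 : Msub).1)),
    if_neg (by decide : ¬((E2 : PetersenE).1 ∈ (a2 : Msub).1)),
    if_neg (by decide : ¬((E2 : PetersenE).1 ∈ (a3 : Msub).1)),
    if_pos (by decide : (E2 : PetersenE).1 ∈ (a4 : Msub).1),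
    if_pos (by decide : (E2 : PetersenE).1 ∈ (a5 : Msub).1)]
  ring

theorem cE3 (α : Msub → ℝ) (c : PetersenE → ℝ)
    (hc : ∀ e : PetersenE, c e = ∑ M, α M * ind M.1 e) :
    c E3 = α a2 + α a4 := by
  rw [hc, sum_Msub]
  simp only [ind]
  rw [if_neg (by decide : ¬((E3 : PetersenE).1 ∈ (a0 : Msub).1)),
    if_neg (by decide : ¬((E3 : PetersenE).1 ∈ (a1 : Msub).1)),
    if_pos (by decide : (E3 : PetersenE).1 ∈ (a2 : Msub).1),
    if_neg (by decide : ¬((E3 : PetersenE).1 ∈ (a3 : Msub).1)),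
    if_pos (by decide : (E3 : PetersenE).1 ∈ (a4 : Msub).1),
    if_neg (by decide : ¬((E3 : PetersenE).1 ∈ (a5 : Msub).1))]
  ring

theorem cE4 (α : Msub → ℝ) (c : PetersenE → ℝ)
    (hc : ∀ e : PetersenE, c e = ∑ M, α M * ind M.1 e) :
    c E4 = α a0 + α a5 := by
  rw [hc, sum_Msub]
  simp only [ind]
  rw [if_pos (by decide : (E4 : PetersenE).1 ∈ (a0 : Msub).1),
    if_neg (by decide : ¬((E4 : PetersenE).1 ∈ (a1 : Msub).1)),
    if_neg (by decide : ¬((E4 : PetersenE).1 ∈ (a2 : Msub).1)),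
    if_neg (by decide : ¬((E4 : PetersenE).1 ∈ (a3 : Msub).1)),
    if_neg (by decide : ¬((E4 : PetersenE).1 ∈ (a4 : Msub).1)),
    if_pos (by decide : (E4 : PetersenE).1 ∈ (a5 : Msub).1)]
  ring

theorem cE5 (α : Msub → ℝ) (c : PetersenE → ℝ)
    (hc : ∀ e : PetersenE, c e = ∑ M, α M * ind M.1 e) :
    c E5 = α a1 + α a3 := by
  rw [hc, sum_Msub]
  simp only [ind]
  rw [if_neg (by decide : ¬((E5 : PetersenE).1 ∈ (a0 : Msub).1)),
    if_pos (by decide : (E5 : PetersenE).1 ∈ (a1 : Msub).1),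
    if_neg (by decide : ¬((E5 : PetersenE).1 ∈ (a2 : Msub).1)),
    if_pos (by decide : (E5 : PetersenE).1 ∈ (a3 : Msub).1),
    if_neg (by decide : ¬((E5 : PetersenE).1 ∈ (a4 : Msub).1)),
    if_neg (by decide : ¬((E5 : PetersenE).1 ∈ (a5 : Msub).1))]
  ring

theorem cE6 (α : Msub → ℝ) (c : PetersenE → ℝ)
    (hc : ∀ e : PetersenE, c e = ∑ M, α M * ind M.1 e) :
    c E6 = α a3 + α a5 := by
  rw [hc, sum_Msub]
  simp only [ind]
  rw [if_neg (by decide : ¬((E6 : PetersenE).1 ∈ (a0 : Msub).1)),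
    if_neg (by decide : ¬((E6 : PetersenE).1 ∈ (a1 : Msub).1)),
    if_neg (by decide : ¬((E6 : PetersenE).1 ∈ (a2 : Msub).1)),
    if_pos (by decide : (E6 : PetersenE).1 ∈ (a3 : Msub).1),
    if_neg (by decide : ¬((E6 : PetersenE).1 ∈ (a4 : Msub).1)),
    if_pos (by decide : (E6 : PetersenE).1 ∈ (a5 : Msub).1)]
  ring

theorem cE7 (α : Msub → ℝ) (c : PetersenE → ℝ)
    (hc : ∀ e : PetersenE, c e = ∑ M, α M * ind M.1 e) :
    c E7 = α a1 + α a2 := by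
  rw [hc, sum_Msub]
  simp only [ind]
  rw [if_neg (by decide : ¬((E7 : PetersenE).1 ∈ (a0 : Msub).1)),
    if_pos (by decide : (E7 : PetersenE).1 ∈ (a1 : Msub).1),
    if_pos (by decide : (E7 : PetersenE).1 ∈ (a2 : Msub).1),
    if_neg (by decide : ¬((E7 : PetersenE).1 ∈ (a3 : Msub).1)),
    if_neg (by decide : ¬((E7 : PetersenE).1 ∈ (a4 : Msub).1)),
    if_neg (by decide : ¬((E7 : PetersenE).1 ∈ (a5 : Msub).1))]
  ring

theorem cE8 (α : Msub → ℝ) (c : PetersenE → ℝ)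
    (hc : ∀ e : PetersenE, c e = ∑ M, α M * ind M.1 e) :
    c E8 = α a0 + α a4 := by
  rw [hc, sum_Msub]
  simp only [ind]
  rw [if_pos (by decide : (E8 : PetersenE).1 ∈ (a0 : Msub).1),
    if_neg (by decide : ¬((E8 : PetersenE).1 ∈ (a1 : Msub).1)),
    if_neg (by decide : ¬((E8 : PetersenE).1 ∈ (a2 : Msub).1)),
    if_neg (by decide : ¬((E8 : PetersenE).1 ∈ (a3 : Msub).1)),
    if_pos (by decide : (E8 : PetersenE).1 ∈ (a4 : Msub).1),
    if_neg (by decide : ¬((E8 : PetersenE).1 ∈ (a5 : Msub).1))]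
  ring

theorem cE9 (α : Msub → ℝ) (c : PetersenE → ℝ)
    (hc : ∀ e : PetersenE, c e = ∑ M, α M * ind M.1 e) :
    c E9 = α a1 + α a4 := by
  rw [hc, sum_Msub]
  simp only [ind]
  rw [if_neg (by decide : ¬((E9 : PetersenE).1 ∈ (a0 : Msub).1)),
    if_pos (by decide : (E9 : PetersenE).1 ∈ (a1 : Msub).1),
    if_neg (by decide : ¬((E9 : PetersenE).1 ∈ (a2 : Msub).1)),
    if_neg (by decide : ¬((E9 : PetersenE).1 ∈ (a3 : Msub).1)),
    if_pos (by decide : (E9 : PetersenE).1 ∈ (a4 : Msub).1),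
    if_neg (by decide : ¬((E9 : PetersenE).1 ∈ (a5 : Msub).1))]
  ring

theorem cE10 (α : Msub → ℝ) (c : PetersenE → ℝ)
    (hc : ∀ e : PetersenE, c e = ∑ M, α M * ind M.1 e) :
    c E10 = α a0 + α a3 := by
  rw [hc, sum_Msub]
  simp only [ind]
  rw [if_pos (by decide : (E10 : PetersenE).1 ∈ (a0 : Msub).1),
    if_neg (by decide : ¬((E10 : PetersenE).1 ∈ (a1 : Msub).1)),
    if_neg (by decide : ¬((E10 : PetersenE).1 ∈ (a2 : Msub).1)),
    if_pos (by decide : (E10 : PetersenE).1 ∈ (a3 : Msub).1),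
    if_neg (by decide : ¬((E10 : PetersenE).1 ∈ (a4 : Msub).1)),
    if_neg (by decide : ¬((E10 : PetersenE).1 ∈ (a5 : Msub).1))]
  ring

theorem cE11 (α : Msub → ℝ) (c : PetersenE → ℝ)
    (hc : ∀ e : PetersenE, c e = ∑ M, α M * ind M.1 e) :
    c E11 = α a2 + α a5 := by
  rw [hc, sum_Msub]
  simp only [ind]
  rw [if_neg (by decide : ¬((E11 : PetersenE).1 ∈ (a0 : Msub).1)),
    if_neg (by decide : ¬((E11 : PetersenE).1 ∈ (a1 : Msub).1)),
    if_pos (by decide : (E11 : PetersenE).1 ∈ (a2 : Msub).1),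
    if_neg (by decide : ¬((E11 : PetersenE).1 ∈ (a3 : Msub).1)),
    if_neg (by decide : ¬((E11 : PetersenE).1 ∈ (a4 : Msub).1)),
    if_pos (by decide : (E11 : PetersenE).1 ∈ (a5 : Msub).1)]
  ring

theorem cE12 (α : Msub → ℝ) (c : PetersenE → ℝ)
    (hc : ∀ e : PetersenE, c e = ∑ M, α M * ind M.1 e) :
    c E12 = α a0 + α a2 := by
  rw [hc, sum_Msub]
  simp only [ind]
  rw [if_pos (by decide : (E12 : PetersenE).1 ∈ (a0 : Msub).1),
    if_neg (by decide : ¬((E12 : PetersenE).1 ∈ (a1 : Msub).1)),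
    if_pos (by decide : (E12 : PetersenE).1 ∈ (a2 : Msub).1),
    if_neg (by decide : ¬((E12 : PetersenE).1 ∈ (a3 : Msub).1)),
    if_neg (by decide : ¬((E12 : PetersenE).1 ∈ (a4 : Msub).1)),
    if_neg (by decide : ¬((E12 : PetersenE).1 ∈ (a5 : Msub).1))]
  ring

theorem cE13 (α : Msub → ℝ) (c : PetersenE → ℝ)
    (hc : ∀ e : PetersenE, c e = ∑ M, α M * ind M.1 e) :
    c E13 = α a1 + α a5 := by
  rw [hc, sum_Msub]
  simp only [ind]
  rw [if_neg (by decide : ¬((E13 : PetersenE).1 ∈ (a0 : Msub).1)),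
    if_pos (by decide : (E13 : PetersenE).1 ∈ (a1 : Msub).1),
    if_neg (by decide : ¬((E13 : PetersenE).1 ∈ (a2 : Msub).1)),
    if_neg (by decide : ¬((E13 : PetersenE).1 ∈ (a3 : Msub).1)),
    if_neg (by decide : ¬((E13 : PetersenE).1 ∈ (a4 : Msub).1)),
    if_pos (by decide : (E13 : PetersenE).1 ∈ (a5 : Msub).1)]
  ring

theorem cE14 (α : Msub → ℝ) (c : PetersenE → ℝ)
    (hc : ∀ e : PetersenE, c e = ∑ M, α M * ind M.1 e) :
    c E14 = α a3 + α a4 := by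
  rw [hc, sum_Msub]
  simp only [ind]
  rw [if_neg (by decide : ¬((E14 : PetersenE).1 ∈ (a0 : Msub).1)),
    if_neg (by decide : ¬((E14 : PetersenE).1 ∈ (a1 : Msub).1)),
    if_neg (by decide : ¬((E14 : PetersenE).1 ∈ (a2 : Msub).1)),
    if_pos (by decide : (E14 : PetersenE).1 ∈ (a3 : Msub).1),
    if_pos (by decide : (E14 : PetersenE).1 ∈ (a4 : Msub).1),
    if_neg (by decide : ¬((E14 : PetersenE).1 ∈ (a5 : Msub).1))]
  ring

/-- if an edge-weighting of the Petersen graph written as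
`c = Σ α_i M_i` over the six perfect matchings has all entries positive
integers, and every odd cut of the weighted graph has weight at least the
common weighted degree `r`, then all `α_i` are nonnegative and either all are
integers or all are half-integers. -/
theorem petersen_coefficients_half_integral
    (α : {M : Finset (Sym2 PetersenV) // Petersen.IsPMFinset M} → ℝ)
    (c : PetersenE → ℝ)
    (hc : ∀ e : PetersenE, c e = ∑ M, α M * ind M.1 e)
    (hpos : ∀ e : PetersenE, ∃ k : ℕ, 0 < k ∧ c e = (k : ℝ))
    (r : ℝ) (hr : ∀ v : PetersenV, wdeg c v = r)
    (hodd : ∀ S : Finset PetersenV, Odd S.card → Odd Sᶜ.card →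
      r ≤ ∑ e : PetersenE,
        (if ∃ u v : PetersenV, e.1 = s(u, v) ∧ u ∈ S ∧ v ∉ S then c e else 0)) :
    (∀ M, 0 ≤ α M) ∧
    ((∀ M, ∃ k : ℤ, α M = (k : ℝ)) ∨ (∀ M, ∃ k : ℤ, α M = (k : ℝ) + 1/2)) := by
  have hrsum : r = α a0 + α a1 + α a2 + α a3 + α a4 + α a5 := by
    have h := hr (vv 0 1)
    simp only [wdeg] at h
    rw [sum_E] at h
    simp only [show ((vv 0 1 : PetersenV) ∈ (E0 : PetersenE).1) from by decide,
      show ((vv 0 1 : PetersenV) ∈ (E1 : PetersenE).1) from by decide,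
      show ((vv 0 1 : PetersenV) ∈ (E2 : PetersenE).1) from by decide,
      show ¬((vv 0 1 : PetersenV) ∈ (E3 : PetersenE).1) from by decide,
      show ¬((vv 0 1 : PetersenV) ∈ (E4 : PetersenE).1) from by decide,
      show ¬((vv 0 1 : PetersenV) ∈ (E5 : PetersenE).1) from by decide,
      show ¬((vv 0 1 : PetersenV) ∈ (E6 : PetersenE).1) from by decide,
      show ¬((vv 0 1 : PetersenV) ∈ (E7 : PetersenE).1) from by decide,
      show ¬((vv 0 1 : PetersenV) ∈ (E8 : PetersenE).1) from by decide,
      show ¬((vv 0 1 : PetersenV) ∈ (E9 : PetersenE).1) from by decide,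
      show ¬((vv 0 1 : PetersenV) ∈ (E10 : PetersenE).1) from by decide,
      show ¬((vv 0 1 : PetersenV) ∈ (E11 : PetersenE).1) from by decide,
      show ¬((vv 0 1 : PetersenV) ∈ (E12 : PetersenE).1) from by decide,
      show ¬((vv 0 1 : PetersenV) ∈ (E13 : PetersenE).1) from by decide,
      show ¬((vv 0 1 : PetersenV) ∈ (E14 : PetersenE).1) from by decide, if_true, if_false, eq_true, eq_false] at h
    rw [cE0 α c hc, cE1 α c hc, cE2 α c hc] at h
    linarith [h]
  have hcut0 := hodd S0 (by decide) (by decide)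
  rw [sum_E] at hcut0
  simp only [show (∃ u v : PetersenV, (E0 : PetersenE).1 = s(u, v) ∧ u ∈ S0 ∧ v ∉ S0) from by decide,
    show ¬(∃ u v : PetersenV, (E1 : PetersenE).1 = s(u, v) ∧ u ∈ S0 ∧ v ∉ S0) from by decide,
    show ¬(∃ u v : PetersenV, (E2 : PetersenE).1 = s(u, v) ∧ u ∈ S0 ∧ v ∉ S0) from by decide,
    show ¬(∃ u v : PetersenV, (E3 : PetersenE).1 = s(u, v) ∧ u ∈ S0 ∧ v ∉ S0) from by decide,
    show (∃ u v : PetersenV, (E4 : PetersenE).1 = s(u, v) ∧ u ∈ S0 ∧ v ∉ S0) from by decide,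
    show ¬(∃ u v : PetersenV, (E5 : PetersenE).1 = s(u, v) ∧ u ∈ S0 ∧ v ∉ S0) from by decide,
    show ¬(∃ u v : PetersenV, (E6 : PetersenE).1 = s(u, v) ∧ u ∈ S0 ∧ v ∉ S0) from by decide,
    show ¬(∃ u v : PetersenV, (E7 : PetersenE).1 = s(u, v) ∧ u ∈ S0 ∧ v ∉ S0) from by decide,
    show (∃ u v : PetersenV, (E8 : PetersenE).1 = s(u, v) ∧ u ∈ S0 ∧ v ∉ S0) from by decide,
    show ¬(∃ u v : PetersenV, (E9 : PetersenE).1 = s(u, v) ∧ u ∈ S0 ∧ v ∉ S0) from by decide,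
    show (∃ u v : PetersenV, (E10 : PetersenE).1 = s(u, v) ∧ u ∈ S0 ∧ v ∉ S0) from by decide,
    show ¬(∃ u v : PetersenV, (E11 : PetersenE).1 = s(u, v) ∧ u ∈ S0 ∧ v ∉ S0) from by decide,
    show (∃ u v : PetersenV, (E12 : PetersenE).1 = s(u, v) ∧ u ∈ S0 ∧ v ∉ S0) from by decide,
    show ¬(∃ u v : PetersenV, (E13 : PetersenE).1 = s(u, v) ∧ u ∈ S0 ∧ v ∉ S0) from by decide,
    show ¬(∃ u v : PetersenV, (E14 : PetersenE).1 = s(u, v) ∧ u ∈ S0 ∧ v ∉ S0) from by decide, if_true, if_false, eq_true, eq_false] at hcut0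
  rw [cE0 α c hc, cE4 α c hc, cE8 α c hc, cE10 α c hc, cE12 α c hc] at hcut0
  have hcut1 := hodd S1 (by decide) (by decide)
  rw [sum_E] at hcut1
  simp only [show (∃ u v : PetersenV, (E0 : PetersenE).1 = s(u, v) ∧ u ∈ S1 ∧ v ∉ S1) from by decide,
    show ¬(∃ u v : PetersenV, (E1 : PetersenE).1 = s(u, v) ∧ u ∈ S1 ∧ v ∉ S1) from by decide,
    show ¬(∃ u v : PetersenV, (E2 : PetersenE).1 = s(u, v) ∧ u ∈ S1 ∧ v ∉ S1) from by decide,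
    show ¬(∃ u v : PetersenV, (E3 : PetersenE).1 = s(u, v) ∧ u ∈ S1 ∧ v ∉ S1) from by decide,
    show ¬(∃ u v : PetersenV, (E4 : PetersenE).1 = s(u, v) ∧ u ∈ S1 ∧ v ∉ S1) from by decide,
    show (∃ u v : PetersenV, (E5 : PetersenE).1 = s(u, v) ∧ u ∈ S1 ∧ v ∉ S1) from by decide,
    show ¬(∃ u v : PetersenV, (E6 : PetersenE).1 = s(u, v) ∧ u ∈ S1 ∧ v ∉ S1) from by decide,
    show (∃ u v : PetersenV, (E7 : PetersenE).1 = s(u, v) ∧ u ∈ S1 ∧ v ∉ S1) from by decide,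
    show ¬(∃ u v : PetersenV, (E8 : PetersenE).1 = s(u, v) ∧ u ∈ S1 ∧ v ∉ S1) from by decide,
    show (∃ u v : PetersenV, (E9 : PetersenE).1 = s(u, v) ∧ u ∈ S1 ∧ v ∉ S1) from by decide,
    show ¬(∃ u v : PetersenV, (E10 : PetersenE).1 = s(u, v) ∧ u ∈ S1 ∧ v ∉ S1) from by decide,
    show ¬(∃ u v : PetersenV, (E11 : PetersenE).1 = s(u, v) ∧ u ∈ S1 ∧ v ∉ S1) from by decide,
    show ¬(∃ u v : PetersenV, (E12 : PetersenE).1 = s(u, v) ∧ u ∈ S1 ∧ v ∉ S1) from by decide,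
    show (∃ u v : PetersenV, (E13 : PetersenE).1 = s(u, v) ∧ u ∈ S1 ∧ v ∉ S1) from by decide,
    show ¬(∃ u v : PetersenV, (E14 : PetersenE).1 = s(u, v) ∧ u ∈ S1 ∧ v ∉ S1) from by decide, if_true, if_false, eq_true, eq_false] at hcut1
  rw [cE0 α c hc, cE5 α c hc, cE7 α c hc, cE9 α c hc, cE13 α c hc] at hcut1
  have hcut2 := hodd S2 (by decide) (by decide)
  rw [sum_E] at hcut2
  simp only [show ¬(∃ u v : PetersenV, (E0 : PetersenE).1 = s(u, v) ∧ u ∈ S2 ∧ v ∉ S2) from by decide,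
    show (∃ u v : PetersenV, (E1 : PetersenE).1 = s(u, v) ∧ u ∈ S2 ∧ v ∉ S2) from by decide,
    show ¬(∃ u v : PetersenV, (E2 : PetersenE).1 = s(u, v) ∧ u ∈ S2 ∧ v ∉ S2) from by decide,
    show (∃ u v : PetersenV, (E3 : PetersenE).1 = s(u, v) ∧ u ∈ S2 ∧ v ∉ S2) from by decide,
    show ¬(∃ u v : PetersenV, (E4 : PetersenE).1 = s(u, v) ∧ u ∈ S2 ∧ v ∉ S2) from by decide,
    show ¬(∃ u v : PetersenV, (E5 : PetersenE).1 = s(u, v) ∧ u ∈ S2 ∧ v ∉ S2) from by decide,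
    show ¬(∃ u v : PetersenV, (E6 : PetersenE).1 = s(u, v) ∧ u ∈ S2 ∧ v ∉ S2) from by decide,
    show (∃ u v : PetersenV, (E7 : PetersenE).1 = s(u, v) ∧ u ∈ S2 ∧ v ∉ S2) from by decide,
    show ¬(∃ u v : PetersenV, (E8 : PetersenE).1 = s(u, v) ∧ u ∈ S2 ∧ v ∉ S2) from by decide,
    show ¬(∃ u v : PetersenV, (E9 : PetersenE).1 = s(u, v) ∧ u ∈ S2 ∧ v ∉ S2) from by decide,
    show ¬(∃ u v : PetersenV, (E10 : PetersenE).1 = s(u, v) ∧ u ∈ S2 ∧ v ∉ S2) from by decide,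
    show (∃ u v : PetersenV, (E11 : PetersenE).1 = s(u, v) ∧ u ∈ S2 ∧ v ∉ S2) from by decide,
    show (∃ u v : PetersenV, (E12 : PetersenE).1 = s(u, v) ∧ u ∈ S2 ∧ v ∉ S2) from by decide,
    show ¬(∃ u v : PetersenV, (E13 : PetersenE).1 = s(u, v) ∧ u ∈ S2 ∧ v ∉ S2) from by decide,
    show ¬(∃ u v : PetersenV, (E14 : PetersenE).1 = s(u, v) ∧ u ∈ S2 ∧ v ∉ S2) from by decide, if_true, if_false, eq_true, eq_false] at hcut2
  rw [cE1 α c hc, cE3 α c hc, cE7 α c hc, cE11 α c hc, cE12 α c hc] at hcut2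
  have hcut3 := hodd S3 (by decide) (by decide)
  rw [sum_E] at hcut3
  simp only [show ¬(∃ u v : PetersenV, (E0 : PetersenE).1 = s(u, v) ∧ u ∈ S3 ∧ v ∉ S3) from by decide,
    show (∃ u v : PetersenV, (E1 : PetersenE).1 = s(u, v) ∧ u ∈ S3 ∧ v ∉ S3) from by decide,
    show ¬(∃ u v : PetersenV, (E2 : PetersenE).1 = s(u, v) ∧ u ∈ S3 ∧ v ∉ S3) from by decide,
    show ¬(∃ u v : PetersenV, (E3 : PetersenE).1 = s(u, v) ∧ u ∈ S3 ∧ v ∉ S3) from by decide,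
    show ¬(∃ u v : PetersenV, (E4 : PetersenE).1 = s(u, v) ∧ u ∈ S3 ∧ v ∉ S3) from by decide,
    show (∃ u v : PetersenV, (E5 : PetersenE).1 = s(u, v) ∧ u ∈ S3 ∧ v ∉ S3) from by decide,
    show (∃ u v : PetersenV, (E6 : PetersenE).1 = s(u, v) ∧ u ∈ S3 ∧ v ∉ S3) from by decide,
    show ¬(∃ u v : PetersenV, (E7 : PetersenE).1 = s(u, v) ∧ u ∈ S3 ∧ v ∉ S3) from by decide,
    show ¬(∃ u v : PetersenV, (E8 : PetersenE).1 = s(u, v) ∧ u ∈ S3 ∧ v ∉ S3) from by decide,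
    show ¬(∃ u v : PetersenV, (E9 : PetersenE).1 = s(u, v) ∧ u ∈ S3 ∧ v ∉ S3) from by decide,
    show (∃ u v : PetersenV, (E10 : PetersenE).1 = s(u, v) ∧ u ∈ S3 ∧ v ∉ S3) from by decide,
    show ¬(∃ u v : PetersenV, (E11 : PetersenE).1 = s(u, v) ∧ u ∈ S3 ∧ v ∉ S3) from by decide,
    show ¬(∃ u v : PetersenV, (E12 : PetersenE).1 = s(u, v) ∧ u ∈ S3 ∧ v ∉ S3) from by decide,
    show ¬(∃ u v : PetersenV, (E13 : PetersenE).1 = s(u, v) ∧ u ∈ S3 ∧ v ∉ S3) from by decide,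
    show (∃ u v : PetersenV, (E14 : PetersenE).1 = s(u, v) ∧ u ∈ S3 ∧ v ∉ S3) from by decide, if_true, if_false, eq_true, eq_false] at hcut3
  rw [cE1 α c hc, cE5 α c hc, cE6 α c hc, cE10 α c hc, cE14 α c hc] at hcut3
  have hcut4 := hodd S4 (by decide) (by decide)
  rw [sum_E] at hcut4
  simp only [show ¬(∃ u v : PetersenV, (E0 : PetersenE).1 = s(u, v) ∧ u ∈ S4 ∧ v ∉ S4) from by decide,
    show ¬(∃ u v : PetersenV, (E1 : PetersenE).1 = s(u, v) ∧ u ∈ S4 ∧ v ∉ S4) from by decide,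
    show (∃ u v : PetersenV, (E2 : PetersenE).1 = s(u, v) ∧ u ∈ S4 ∧ v ∉ S4) from by decide,
    show (∃ u v : PetersenV, (E3 : PetersenE).1 = s(u, v) ∧ u ∈ S4 ∧ v ∉ S4) from by decide,
    show ¬(∃ u v : PetersenV, (E4 : PetersenE).1 = s(u, v) ∧ u ∈ S4 ∧ v ∉ S4) from by decide,
    show ¬(∃ u v : PetersenV, (E5 : PetersenE).1 = s(u, v) ∧ u ∈ S4 ∧ v ∉ S4) from by decide,
    show ¬(∃ u v : PetersenV, (E6 : PetersenE).1 = s(u, v) ∧ u ∈ S4 ∧ v ∉ S4) from by decide,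
    show ¬(∃ u v : PetersenV, (E7 : PetersenE).1 = s(u, v) ∧ u ∈ S4 ∧ v ∉ S4) from by decide,
    show (∃ u v : PetersenV, (E8 : PetersenE).1 = s(u, v) ∧ u ∈ S4 ∧ v ∉ S4) from by decide,
    show (∃ u v : PetersenV, (E9 : PetersenE).1 = s(u, v) ∧ u ∈ S4 ∧ v ∉ S4) from by decide,
    show ¬(∃ u v : PetersenV, (E10 : PetersenE).1 = s(u, v) ∧ u ∈ S4 ∧ v ∉ S4) from by decide,
    show ¬(∃ u v : PetersenV, (E11 : PetersenE).1 = s(u, v) ∧ u ∈ S4 ∧ v ∉ S4) from by decide,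
    show ¬(∃ u v : PetersenV, (E12 : PetersenE).1 = s(u, v) ∧ u ∈ S4 ∧ v ∉ S4) from by decide,
    show ¬(∃ u v : PetersenV, (E13 : PetersenE).1 = s(u, v) ∧ u ∈ S4 ∧ v ∉ S4) from by decide,
    show (∃ u v : PetersenV, (E14 : PetersenE).1 = s(u, v) ∧ u ∈ S4 ∧ v ∉ S4) from by decide, if_true, if_false, eq_true, eq_false] at hcut4
  rw [cE2 α c hc, cE3 α c hc, cE8 α c hc, cE9 α c hc, cE14 α c hc] at hcut4
  have hcut5 := hodd S5 (by decide) (by decide)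
  rw [sum_E] at hcut5
  simp only [show ¬(∃ u v : PetersenV, (E0 : PetersenE).1 = s(u, v) ∧ u ∈ S5 ∧ v ∉ S5) from by decide,
    show ¬(∃ u v : PetersenV, (E1 : PetersenE).1 = s(u, v) ∧ u ∈ S5 ∧ v ∉ S5) from by decide,
    show (∃ u v : PetersenV, (E2 : PetersenE).1 = s(u, v) ∧ u ∈ S5 ∧ v ∉ S5) from by decide,
    show ¬(∃ u v : PetersenV, (E3 : PetersenE).1 = s(u, v) ∧ u ∈ S5 ∧ v ∉ S5) from by decide,
    show (∃ u v : PetersenV, (E4 : PetersenE).1 = s(u, v) ∧ u ∈ S5 ∧ v ∉ S5) from by decide,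
    show ¬(∃ u v : PetersenV, (E5 : PetersenE).1 = s(u, v) ∧ u ∈ S5 ∧ v ∉ S5) from by decide,
    show (∃ u v : PetersenV, (E6 : PetersenE).1 = s(u, v) ∧ u ∈ S5 ∧ v ∉ S5) from by decide,
    show ¬(∃ u v : PetersenV, (E7 : PetersenE).1 = s(u, v) ∧ u ∈ S5 ∧ v ∉ S5) from by decide,
    show ¬(∃ u v : PetersenV, (E8 : PetersenE).1 = s(u, v) ∧ u ∈ S5 ∧ v ∉ S5) from by decide,
    show ¬(∃ u v : PetersenV, (E9 : PetersenE).1 = s(u, v) ∧ u ∈ S5 ∧ v ∉ S5) from by decide,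
    show ¬(∃ u v : PetersenV, (E10 : PetersenE).1 = s(u, v) ∧ u ∈ S5 ∧ v ∉ S5) from by decide,
    show (∃ u v : PetersenV, (E11 : PetersenE).1 = s(u, v) ∧ u ∈ S5 ∧ v ∉ S5) from by decide,
    show ¬(∃ u v : PetersenV, (E12 : PetersenE).1 = s(u, v) ∧ u ∈ S5 ∧ v ∉ S5) from by decide,
    show (∃ u v : PetersenV, (E13 : PetersenE).1 = s(u, v) ∧ u ∈ S5 ∧ v ∉ S5) from by decide,
    show ¬(∃ u v : PetersenV, (E14 : PetersenE).1 = s(u, v) ∧ u ∈ S5 ∧ v ∉ S5) from by decide, if_true, if_false, eq_true, eq_false] at hcut5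
  rw [cE2 α c hc, cE4 α c hc, cE6 α c hc, cE11 α c hc, cE13 α c hc] at hcut5
  have hn0 : 0 ≤ α a0 := by linarith [hcut0, hrsum]
  have hn1 : 0 ≤ α a1 := by linarith [hcut1, hrsum]
  have hn2 : 0 ≤ α a2 := by linarith [hcut2, hrsum]
  have hn3 : 0 ≤ α a3 := by linarith [hcut3, hrsum]
  have hn4 : 0 ≤ α a4 := by linarith [hcut4, hrsum]
  have hn5 : 0 ≤ α a5 := by linarith [hcut5, hrsum]
  obtain ⟨k01, hk01pos, hk01⟩ := hpos E0
  rw [cE0 α c hc] at hk01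
  obtain ⟨k02, hk02pos, hk02⟩ := hpos E12
  rw [cE12 α c hc] at hk02
  obtain ⟨k03, hk03pos, hk03⟩ := hpos E10
  rw [cE10 α c hc] at hk03
  obtain ⟨k04, hk04pos, hk04⟩ := hpos E8
  rw [cE8 α c hc] at hk04
  obtain ⟨k05, hk05pos, hk05⟩ := hpos E4
  rw [cE4 α c hc] at hk05
  obtain ⟨k12, hk12pos, hk12⟩ := hpos E7
  rw [cE7 α c hc] at hk12
  constructor
  · intro M
    rcases pm_cases M.1 M.2 with h | h | h | h | h | h
    · rw [show M = a0 from Subtype.ext h]; exact hn0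
    · rw [show M = a1 from Subtype.ext h]; exact hn1
    · rw [show M = a2 from Subtype.ext h]; exact hn2
    · rw [show M = a3 from Subtype.ext h]; exact hn3
    · rw [show M = a4 from Subtype.ext h]; exact hn4
    · rw [show M = a5 from Subtype.ext h]; exact hn5

  · rcases Int.even_or_odd ((k01 : ℤ) + (k02 : ℤ) - (k12 : ℤ)) with ⟨m, hm⟩ | ⟨m, hm⟩
    · have hmr := congrArg (fun z : ℤ => (z : ℝ)) hm
      push_cast at hmr
      have ha0 : α a0 = (m : ℝ) := by linarith
      left
      intro M
      rcases pm_cases M.1 M.2 with h | h | h | h | h | h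
      · rw [show M = a0 from Subtype.ext h]; exact ⟨m, ha0⟩
      · rw [show M = a1 from Subtype.ext h]; exact ⟨(k01 : ℤ) - m, by push_cast; linarith⟩
      · rw [show M = a2 from Subtype.ext h]; exact ⟨(k02 : ℤ) - m, by push_cast; linarith⟩
      · rw [show M = a3 from Subtype.ext h]; exact ⟨(k03 : ℤ) - m, by push_cast; linarith⟩
      · rw [show M = a4 from Subtype.ext h]; exact ⟨(k04 : ℤ) - m, by push_cast; linarith⟩
      · rw [show M = a5 from Subtype.ext h]; exact ⟨(k05 : ℤ) - m, by push_cast; linarith⟩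
    · have hmr := congrArg (fun z : ℤ => (z : ℝ)) hm
      push_cast at hmr
      have ha0 : α a0 = (m : ℝ) + 1/2 := by linarith
      right
      intro M
      rcases pm_cases M.1 M.2 with h | h | h | h | h | h
      · rw [show M = a0 from Subtype.ext h]; exact ⟨m, ha0⟩
      · rw [show M = a1 from Subtype.ext h]; exact ⟨(k01 : ℤ) - m - 1, by push_cast; linarith⟩
      · rw [show M = a2 from Subtype.ext h]; exact ⟨(k02 : ℤ) - m - 1, by push_cast; linarith⟩
      · rw [show M = a3 from Subtype.ext h]; exact ⟨(k03 : ℤ) - m - 1, by push_cast; linarith⟩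
      · rw [show M = a4 from Subtype.ext h]; exact ⟨(k04 : ℤ) - m - 1, by push_cast; linarith⟩
      · rw [show M = a5 from Subtype.ext h]; exact ⟨(k05 : ℤ) - m - 1, by push_cast; linarith⟩
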